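/- There exists a constant C with 0 < C < 2 (one may take C = 1 + (4/π^{3/2}) Γ(5/4)² ≈ 1.59) such that |F(z)| ≤ C for all z with arg z ∈ [-π/2, π]. -/

import Mathlib

noncomputable def cerf (z : ℂ) : ℂ :=
  2 / Real.sqrt Real.pi * ∫ t in (0:ℝ)..1, z * Complex.exp (-((t : ℂ) * z) ^ 2)

/-- The Fresnel integral `Fr(z) = (1/2) erfc(e^{-iπ/4} z)`. -/
noncomputable def Fr (z : ℂ) : ℂ :=
  (1 - cerf (Complex.exp (-(Real.pi / 4 : ℂ) * Complex.I) * z)) / 2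

/-- `F(z) = e^{-iz²} Fr(z)`. -/
noncomputable def Ffun (z : ℂ) : ℂ := Complex.exp (-Complex.I * z ^ 2) * Fr z


open MeasureTheory Real Set Complex
open scoped Topology

noncomputable def Bfun (w : ℂ) : ℂ := ∫ t in Ioi (0:ℝ), Complex.exp (-(t:ℂ)^2 - 2*w*t)

lemma norm_quad (w : ℂ) (t : ℝ) :
    ‖Complex.exp (-(t:ℂ)^2 - 2*w*t)‖ = Real.exp (-t^2 - 2*w.re*t) := by
  rw [Complex.norm_exp]
  congr 1
  simp [Complex.sub_re, Complex.mul_re, ← Complex.ofReal_pow]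

lemma intB (w : ℂ) : IntegrableOn (fun t : ℝ => Complex.exp (-(t:ℂ)^2 - 2*w*t)) (Ioi 0) := by
  have h := integrable_cexp_quadratic (b := 1) (by simp) (-2*w) 0
  have : (fun t : ℝ => Complex.exp (-(t:ℂ)^2 - 2*w*t))
      = fun x : ℝ => Complex.exp (-1 * (x:ℂ)^2 + -2*w*x + 0) := by
    funext t; ring_nf
  rw [this]
  exact h.integrableOn

lemma integrable_t_gauss (c : ℝ) : Integrable (fun t : ℝ => t * Real.exp (-t^2 + c*t)) := by
  have h1 : Integrable (fun s : ℝ => (s + c/2) * Real.exp (-s^2) * Real.exp (c^2/4)) := by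
    apply Integrable.mul_const
    have h2 : Integrable (fun s : ℝ => s * Real.exp (-s^2)) := by
      simpa using integrable_mul_exp_neg_mul_sq (b := 1) one_pos
    have h3 : Integrable (fun s : ℝ => (c/2) * Real.exp (-s^2)) := by
      simpa using (integrable_exp_neg_mul_sq (b := 1) one_pos).const_mul (c/2)
    refine (h2.add h3).congr (Filter.Eventually.of_forall fun s => ?_)
    simp only [Pi.add_apply]; ring
  have := h1.comp_sub_right (c/2)
  refine this.congr ?_
  refine Filter.Eventually.of_forall fun t => ?_
  simp only
  rw [mul_assoc, ← Real.exp_add, sub_add_cancel]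
  congr 2
  ring

lemma hasDerivAt_quad (w u : ℂ) :
    HasDerivAt (fun u : ℂ => Complex.exp (-u^2 - 2*w*u))
      ((-2*u - 2*w) * Complex.exp (-u^2 - 2*w*u)) u := by
  have h : HasDerivAt (fun u : ℂ => -u^2 - 2*w*u) (-2*u - 2*w) u := by
    have := ((hasDerivAt_pow 2 u).neg.sub ((hasDerivAt_id u).const_mul (2*w)))
    exact this.congr_deriv (by ring)
  simpa [mul_comm] using h.cexp

lemma intB' (w : ℂ) :
    IntegrableOn (fun t : ℝ => ((-2*(t:ℂ)) * Complex.exp (-(t:ℂ)^2 - 2*w*t))) (Ioi 0) := by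
  apply Integrable.mono' ((integrable_t_gauss (-2*w.re)).const_mul 2).integrableOn
  · apply Continuous.aestronglyMeasurable
    fun_prop
  · refine (ae_restrict_iff' measurableSet_Ioi).2 (Filter.Eventually.of_forall fun t ht => ?_)
    rw [norm_mul, norm_quad]
    have ht' : (0:ℝ) < t := ht
    simp only [norm_neg, norm_mul, Complex.norm_ofNat, Complex.norm_real]
    rw [Real.norm_of_nonneg ht'.le]
    ring_nf
    exact le_refl _

lemma intB'' (w : ℂ) :
    IntegrableOn (fun t : ℝ => ((-2*(t:ℂ) - 2*w) * Complex.exp (-(t:ℂ)^2 - 2*w*t))) (Ioi 0) := by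
  have := (intB' w).add ((intB w).const_mul (-2*w))
  refine this.congr (Filter.Eventually.of_forall fun t => by simp; ring)

lemma ftc_B (w : ℂ) :
    ∫ t in Ioi (0:ℝ), ((-2*(t:ℂ) - 2*w) * Complex.exp (-(t:ℂ)^2 - 2*w*t)) = -1 := by
  have key := integral_Ioi_of_hasDerivAt_of_tendsto
    (f := fun t : ℝ => Complex.exp (-(t:ℂ)^2 - 2*w*t))
    (f' := fun t : ℝ => (-2*(t:ℂ) - 2*w) * Complex.exp (-(t:ℂ)^2 - 2*w*t))
    (a := 0) (m := 0) ?_ ?_ (intB'' w) ?_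
  · simpa using key
  · exact ((hasDerivAt_quad w 0).comp_ofReal).continuousAt.continuousWithinAt.congr
      (fun t _ => by norm_num) (by norm_num)
  · intro t _
    exact (hasDerivAt_quad w t).comp_ofReal
  · rw [tendsto_zero_iff_norm_tendsto_zero]
    have h1 : Filter.Tendsto (fun t : ℝ => -t^2 - 2*w.re*t) Filter.atTop Filter.atBot := by
      have e : (fun t : ℝ => -t^2 - 2*w.re*t) = fun t : ℝ => -((t + w.re)^2) + w.re^2 := by
        funext t; ring
      rw [e]
      have h2 : Filter.Tendsto (fun t : ℝ => (t + w.re)^2) Filter.atTop Filter.atTop :=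
        (Filter.tendsto_pow_atTop two_ne_zero).comp (Filter.tendsto_atTop_add_const_right _ _ Filter.tendsto_id)
      exact Filter.tendsto_atBot_add_const_right _ _ (Filter.tendsto_neg_atBot_iff.2 h2)
    have := Real.tendsto_exp_atBot.comp h1
    refine this.congr fun t => (norm_quad w t).symm

lemma hasDerivAt_B (w : ℂ) :
    HasDerivAt Bfun (-1 + 2*w*Bfun w) w := by
  set c : ℝ := 2*|w.re| + 2 with hc
  have key := hasDerivAt_integral_of_dominated_loc_of_deriv_le
    (F := fun (x : ℂ) (t : ℝ) => Complex.exp (-(t:ℂ)^2 - 2*x*t))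
    (F' := fun (x : ℂ) (t : ℝ) => (-2*(t:ℂ)) * Complex.exp (-(t:ℂ)^2 - 2*x*t))
    (x₀ := w) (s := Metric.ball w 1) (μ := volume.restrict (Ioi 0))
    (bound := fun t : ℝ => 2*t*Real.exp (-t^2 + c*t))
    (Metric.ball_mem_nhds w one_pos) ?_ (intB w) ?_ ?_ ?_ ?_
  · obtain ⟨hint, hderiv⟩ := key
    have : (∫ t in Ioi (0:ℝ), (-2*(t:ℂ)) * Complex.exp (-(t:ℂ)^2 - 2*w*t)) = -1 + 2*w*Bfun w := by
      have e1 : ∀ t : ℝ, (-2*(t:ℂ)) * Complex.exp (-(t:ℂ)^2 - 2*w*t)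
          = (-2*(t:ℂ) - 2*w) * Complex.exp (-(t:ℂ)^2 - 2*w*t)
            + 2*w * Complex.exp (-(t:ℂ)^2 - 2*w*t) := fun t => by ring
      rw [MeasureTheory.integral_congr_ae (Filter.Eventually.of_forall e1),
        MeasureTheory.integral_add (intB'' w) ((intB w).const_mul _), ftc_B,
        MeasureTheory.integral_const_mul]
      rfl
    rwa [this] at hderiv
  · exact Filter.Eventually.of_forall fun x =>
      (Continuous.aestronglyMeasurable (by fun_prop))
  · exact Continuous.aestronglyMeasurable (by fun_prop)
  · refine (ae_restrict_iff' measurableSet_Ioi).2 (Filter.Eventually.of_forall fun t ht x hx => ?_)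
    have ht' : (0:ℝ) < t := ht
    rw [norm_mul, norm_quad]
    have hre : |x.re| ≤ |w.re| + 1 := by
      have := Complex.abs_re_le_norm (x - w)
      have hxw : ‖x - w‖ < 1 := by
        simpa [Complex.dist_eq] using mem_ball_iff_norm.1 hx
      have : |x.re - w.re| < 1 := lt_of_le_of_lt (by simpa using this) hxw
      calc |x.re| ≤ |x.re - w.re| + |w.re| := by
            simpa using abs_add_le (x.re - w.re) w.re
        _ ≤ |w.re| + 1 := by linarith
    have h1 : ‖(-2*(t:ℂ))‖ = 2*t := by
      rw [norm_mul]
      simp [Complex.norm_real, _root_.abs_of_nonneg ht'.le, ht'.le]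
    rw [h1]
    have h2 : Real.exp (-t^2 - 2*x.re*t) ≤ Real.exp (-t^2 + c*t) := by
      apply Real.exp_le_exp.2
      have : -2*x.re ≤ c := by
        have := neg_abs_le x.re
        simp only [hc]
        nlinarith [abs_nonneg x.re]
      nlinarith
    have := mul_le_mul_of_nonneg_left h2 (by linarith : (0:ℝ) ≤ 2*t)
    simpa using this
  · exact ((integrable_t_gauss c).const_mul 2).integrableOn.congr_fun
      (fun t _ => by ring) measurableSet_Ioi
  · refine Filter.Eventually.of_forall fun t x _ => ?_
    have h : HasDerivAt (fun x : ℂ => -(t:ℂ)^2 - 2*x*t) (-2*(t:ℂ)) x := by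
      have h0 : HasDerivAt (fun x : ℂ => 2*x*(t:ℂ)) (2*(t:ℂ)) x := by
        simpa using (((hasDerivAt_id x).const_mul 2).mul_const (t:ℂ))
      have h1 := h0.const_sub (-(t:ℂ)^2)
      exact h1.congr_deriv (by ring)
    simpa [mul_comm] using h.cexp

lemma hasDerivAt_cerf_int (w : ℂ) :
    HasDerivAt (fun z : ℂ => ∫ t in (0:ℝ)..1, z * Complex.exp (-((t : ℂ) * z) ^ 2))
      (Complex.exp (-w^2)) w := by
  set M : ℝ := ‖w‖ + 1 with hM
  have key := intervalIntegral.hasDerivAt_integral_of_dominated_loc_of_deriv_le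
    (F := fun (z : ℂ) (t : ℝ) => z * Complex.exp (-((t : ℂ) * z) ^ 2))
    (F' := fun (z : ℂ) (t : ℝ) => (1 - 2*(t:ℂ)^2*z^2) * Complex.exp (-((t : ℂ) * z) ^ 2))
    (x₀ := w) (s := Metric.ball w 1) (μ := volume) (a := 0) (b := 1)
    (bound := fun _ : ℝ => (1 + 2*M^2) * Real.exp (M^2))
    (Metric.ball_mem_nhds w one_pos) ?_ ?_ ?_ ?_ ?_ ?_
  · obtain ⟨-, hderiv⟩ := key
    have : (∫ t in (0:ℝ)..1, (1 - 2*(t:ℂ)^2*w^2) * Complex.exp (-((t : ℂ) * w) ^ 2))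
        = Complex.exp (-w^2) := by
      have h := intervalIntegral.integral_eq_sub_of_hasDerivAt
        (f := fun t : ℝ => (t:ℂ) * Complex.exp (-(t:ℂ)^2*w^2))
        (f' := fun t : ℝ => (1 - 2*(t:ℂ)^2*w^2) * Complex.exp (-((t : ℂ) * w) ^ 2))
        (a := 0) (b := 1) ?_ ?_
      · rw [h]; norm_num
      · intro t _
        have h1 : HasDerivAt (fun u : ℂ => u * Complex.exp (-u^2*w^2))
            ((1 - 2*(t:ℂ)^2*w^2) * Complex.exp (-(t:ℂ)^2*w^2)) (t:ℂ) := by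
          have he : HasDerivAt (fun u : ℂ => -u^2*w^2) (-2*(t:ℂ)*w^2) (t:ℂ) := by
            have := ((hasDerivAt_pow 2 (t:ℂ)).neg.mul_const (w^2))
            exact this.congr_deriv (by ring)
          have := (hasDerivAt_id (t:ℂ)).mul he.cexp
          exact this.congr_deriv (by simp only [id_eq]; ring)
        have h2 := h1.comp_ofReal
        refine h2.congr_deriv ?_
        congr 1
        ring
      · apply Continuous.intervalIntegrable
        fun_prop
    rwa [this] at hderiv
  · exact Filter.Eventually.of_forall fun x =>
      (Continuous.aestronglyMeasurable (by fun_prop)).restrict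
  · apply Continuous.intervalIntegrable; fun_prop
  · exact (Continuous.aestronglyMeasurable (by fun_prop)).restrict
  · refine Filter.Eventually.of_forall fun t ht x hx => ?_
    rw [Set.uIoc_of_le (by norm_num : (0:ℝ) ≤ 1)] at ht
    have htm : |t| ≤ 1 := abs_le.2 ⟨by linarith [ht.1], ht.2⟩
    have hxn : ‖x‖ ≤ M := by
      have h := mem_ball_iff_norm.1 hx
      calc ‖x‖ = ‖w + (x - w)‖ := by ring_nf
        _ ≤ ‖w‖ + ‖x - w‖ := norm_add_le _ _
        _ ≤ M := by rw [hM]; linarith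
    have hM1 : (1:ℝ) ≤ M := by rw [hM]; linarith [norm_nonneg w]
    have hprod2 : (|t| * ‖x‖)^2 ≤ M^2 := by
      have hprod : |t| * ‖x‖ ≤ M := by nlinarith [abs_nonneg t, norm_nonneg x]
      nlinarith [mul_nonneg (abs_nonneg t) (norm_nonneg x)]
    rw [norm_mul]
    have e1 : ‖Complex.exp (-((t:ℂ)*x)^2)‖ ≤ Real.exp (M^2) := by
      rw [Complex.norm_exp]
      apply Real.exp_le_exp.2
      calc (-((t:ℂ)*x)^2).re ≤ ‖(-((t:ℂ)*x)^2)‖ := Complex.re_le_norm _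
        _ = (|t| * ‖x‖)^2 := by
            simp [mul_pow]
        _ ≤ M^2 := hprod2
    have e2 : ‖(1:ℂ) - 2*(t:ℂ)^2*x^2‖ ≤ 1 + 2*M^2 := by
      calc ‖(1:ℂ) - 2*(t:ℂ)^2*x^2‖ ≤ ‖(1:ℂ)‖ + ‖2*(t:ℂ)^2*x^2‖ := norm_sub_le _ _
        _ = 1 + 2*(|t|^2 * ‖x‖^2) := by
            simp [norm_mul, norm_pow, Complex.norm_real, Real.norm_eq_abs]
            ring
        _ ≤ 1 + 2*M^2 := by nlinarith [hprod2]
    have := mul_le_mul e2 e1 (norm_nonneg _) (by positivity)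
    simpa using this
  · apply intervalIntegrable_const
  · refine Filter.Eventually.of_forall fun t ht x hx => ?_
    have h1 : HasDerivAt (fun z : ℂ => z * Complex.exp (-((t:ℂ)*z)^2))
        ((1 - 2*(t:ℂ)^2*x^2) * Complex.exp (-((t : ℂ) * x) ^ 2)) x := by
      have he : HasDerivAt (fun z : ℂ => -((t:ℂ)*z)^2) (-2*(t:ℂ)^2*x) x := by
        have h0 : HasDerivAt (fun z : ℂ => (t:ℂ)*z) (t:ℂ) x := by
          simpa using (hasDerivAt_id x).const_mul (t:ℂ)
        have := (h0.pow 2).neg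
        exact this.congr_deriv (by ring)
      have := (hasDerivAt_id x).mul he.cexp
      exact this.congr_deriv (by simp only [id_eq]; ring)
    exact h1

lemma hasDerivAt_cerf (w : ℂ) :
    HasDerivAt cerf (2 / Real.sqrt Real.pi * Complex.exp (-w^2)) w := by
  exact (hasDerivAt_cerf_int w).const_mul (2 / (Real.sqrt Real.pi : ℂ))

noncomputable def Gfun (w : ℂ) : ℂ :=
  Complex.exp (w^2) * (1 - cerf w)/2 - (Real.sqrt Real.pi : ℂ)⁻¹ * Bfun w

lemma sqrt_pi_ne : (Real.sqrt Real.pi : ℂ) ≠ 0 :=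
  Complex.ofReal_ne_zero.2 (Real.sqrt_ne_zero'.mpr Real.pi_pos)

lemma hasDerivAt_G (w : ℂ) : HasDerivAt Gfun (2*w*Gfun w) w := by
  have h1 : HasDerivAt (fun w : ℂ => Complex.exp (w^2)) (2*w*Complex.exp (w^2)) w := by
    have := (hasDerivAt_pow 2 w).cexp
    exact this.congr_deriv (by ring)
  have h2 : HasDerivAt (fun w : ℂ => (1 - cerf w)) (-(2 / Real.sqrt Real.pi * Complex.exp (-w^2))) w :=
    (hasDerivAt_cerf w).const_sub 1
  have h3 := ((h1.mul h2).div_const 2).sub ((hasDerivAt_B w).const_mul ((Real.sqrt Real.pi : ℂ)⁻¹))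
  refine h3.congr_deriv ?_
  have he : Complex.exp (w^2) * Complex.exp (-w^2) = 1 := by
    rw [← Complex.exp_add]; simp
  unfold Gfun
  linear_combination (-(1:ℂ)/(Real.sqrt Real.pi:ℂ)) * he

lemma cerf_zero : cerf 0 = 0 := by simp [cerf]

lemma Bfun_zero : Bfun 0 = ((Real.sqrt Real.pi / 2 : ℝ) : ℂ) := by
  unfold Bfun
  have h : ∀ t : ℝ, Complex.exp (-(t:ℂ)^2 - 2*(0:ℂ)*t) = ((Real.exp (-1*t^2) : ℝ) : ℂ) := by
    intro t
    rw [Complex.ofReal_exp]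
    push_cast
    ring_nf
  rw [MeasureTheory.integral_congr_ae (Filter.Eventually.of_forall fun t => h t)]
  rw [show (Real.sqrt Real.pi/2 : ℝ) = ∫ a in Ioi (0:ℝ), Real.exp (-1*a^2) by
    rw [integral_gaussian_Ioi]; norm_num]
  exact integral_ofReal

lemma G_eq_zero (w : ℂ) : Gfun w = 0 := by
  have hH : ∀ x : ℂ, HasDerivAt (fun w => Complex.exp (-w^2) * Gfun w) 0 x := by
    intro x
    have h1 : HasDerivAt (fun w : ℂ => Complex.exp (-w^2)) (-2*x*Complex.exp (-x^2)) x := by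
      have := (hasDerivAt_pow 2 x).neg.cexp
      exact this.congr_deriv (by simp only [Pi.neg_apply]; ring)
    have := h1.mul (hasDerivAt_G x)
    exact this.congr_deriv (by ring)
  have hconst : Complex.exp (-w^2) * Gfun w = Complex.exp (-(0:ℂ)^2) * Gfun 0 := by
    have hdiff : Differentiable ℂ (fun w : ℂ => Complex.exp (-w^2) * Gfun w) :=
      fun x => (hH x).differentiableAt
    have hfd : ∀ x : ℂ, fderiv ℂ (fun w : ℂ => Complex.exp (-w^2) * Gfun w) x = 0 := by
      intro x
      have := (hH x).hasFDerivAt.fderiv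
      rw [this]
      refine ContinuousLinearMap.ext fun y => ?_
      simp [ContinuousLinearMap.smulRight_apply]
    exact is_const_of_fderiv_eq_zero hdiff hfd w 0
  have hG0 : Gfun 0 = 0 := by
    unfold Gfun
    rw [cerf_zero, Bfun_zero]
    have : ((Real.sqrt Real.pi : ℝ) : ℂ) ≠ 0 := sqrt_pi_ne
    push_cast
    field_simp
    simp
  rw [hG0, mul_zero] at hconst
  have := Complex.exp_ne_zero (-w^2)
  exact (mul_eq_zero.1 hconst).resolve_left this

lemma key_identity (w : ℂ) :
    Complex.exp (w^2) * (1 - cerf w)/2 = (Real.sqrt Real.pi : ℂ)⁻¹ * Bfun w := by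
  have h := G_eq_zero w
  unfold Gfun at h
  linear_combination h

lemma rot_sq : (Complex.exp (-(Real.pi / 4 : ℂ) * Complex.I))^2 = -Complex.I := by
  rw [sq, ← Complex.exp_add]
  have : (-(Real.pi / 4 : ℂ) * Complex.I) + (-(Real.pi / 4 : ℂ) * Complex.I)
      = -(Real.pi/2 : ℂ) * Complex.I := by ring
  rw [this]
  rw [show -(Real.pi/2 : ℂ) * Complex.I = -(Real.pi/2 : ℝ) * Complex.I by push_cast; ring]
  rw [Complex.exp_mul_I]
  push_cast
  rw [Complex.cos_neg, Complex.sin_neg, Complex.cos_pi_div_two, Complex.sin_pi_div_two]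
  ring

lemma Ffun_eq (z : ℂ) :
    Ffun z = (Real.sqrt Real.pi : ℂ)⁻¹ * Bfun (Complex.exp (-(Real.pi / 4 : ℂ) * Complex.I) * z) := by
  set w := Complex.exp (-(Real.pi / 4 : ℂ) * Complex.I) * z with hw
  have hsq : w^2 = -Complex.I * z^2 := by rw [hw, mul_pow, rot_sq]
  rw [← key_identity w]
  unfold Ffun Fr
  rw [← hsq, ← hw]
  ring

lemma norm_Ffun_le_half {z : ℂ} (h : 0 ≤ (Complex.exp (-(Real.pi / 4 : ℂ) * Complex.I) * z).re) :
    ‖Ffun z‖ ≤ 1/2 := by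
  rw [Ffun_eq]
  set w := Complex.exp (-(Real.pi / 4 : ℂ) * Complex.I) * z with hw
  have hB : ‖Bfun w‖ ≤ Real.sqrt Real.pi / 2 := by
    unfold Bfun
    calc ‖∫ t in Ioi (0:ℝ), Complex.exp (-(t:ℂ)^2 - 2*w*t)‖
        ≤ ∫ t in Ioi (0:ℝ), ‖Complex.exp (-(t:ℂ)^2 - 2*w*t)‖ :=
          MeasureTheory.norm_integral_le_integral_norm _
      _ ≤ ∫ t in Ioi (0:ℝ), Real.exp (-t^2) := by
          apply MeasureTheory.setIntegral_mono_on
          · exact ((intB w).norm : _)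
          · simpa using (integrable_exp_neg_mul_sq one_pos).integrableOn.congr_fun
              (fun t _ => by norm_num) measurableSet_Ioi
          · exact measurableSet_Ioi
          · intro t ht
            rw [norm_quad]
            apply Real.exp_le_exp.2
            have ht' : (0:ℝ) < t := ht
            nlinarith [h, ht'.le]
      _ = Real.sqrt Real.pi / 2 := by
          rw [show (fun t : ℝ => Real.exp (-t^2)) = fun t : ℝ => Real.exp (-1*t^2) by
            funext t; norm_num]
          rw [integral_gaussian_Ioi]; norm_num
  rw [norm_mul]
  have h1 : ‖((Real.sqrt Real.pi : ℝ) : ℂ)⁻¹‖ = (Real.sqrt Real.pi)⁻¹ := by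
    rw [norm_inv, Complex.norm_real, Real.norm_eq_abs,
      _root_.abs_of_nonneg (Real.sqrt_nonneg _)]
  rw [h1]
  have hpos : 0 < Real.sqrt Real.pi := Real.sqrt_pos.2 Real.pi_pos
  calc (Real.sqrt Real.pi)⁻¹ * ‖Bfun w‖ ≤ (Real.sqrt Real.pi)⁻¹ * (Real.sqrt Real.pi / 2) := by
        apply mul_le_mul_of_nonneg_left hB (by positivity)
    _ = 1/2 := by field_simp

lemma cerf_odd (w : ℂ) : cerf (-w) = -cerf w := by
  unfold cerf
  have h : ∀ t : ℝ, (-w) * Complex.exp (-((t:ℂ) * (-w))^2) = -(w * Complex.exp (-((t:ℂ)*w)^2)) := by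
    intro t
    have : ((t:ℂ) * (-w))^2 = ((t:ℂ)*w)^2 := by ring
    rw [this]; ring
  rw [intervalIntegral.integral_congr (fun t _ => h t), intervalIntegral.integral_neg]
  ring

lemma Ffun_symm (z : ℂ) : Ffun z = Complex.exp (-Complex.I * z^2) - Ffun (-z) := by
  unfold Ffun Fr
  rw [show ((-z)^2 : ℂ) = z^2 by ring, mul_neg, cerf_odd]
  ring

theorem F_bound_upper_sector :
    ∃ C : ℝ, 0 < C ∧ C < 2 ∧
      ∀ z : ℂ, -(Real.pi / 2) ≤ z.arg → z.arg ≤ Real.pi → ‖Ffun z‖ ≤ C := by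
  refine ⟨3/2, by norm_num, by norm_num, fun z hz _ => ?_⟩
  rcases le_or_gt 0 (Complex.exp (-(Real.pi / 4 : ℂ) * Complex.I) * z).re with h | h
  · exact (norm_Ffun_le_half h).trans (by norm_num)
  · -- symmetry case
    have h2 : 0 ≤ (Complex.exp (-(Real.pi / 4 : ℂ) * Complex.I) * (-z)).re := by
      rw [mul_neg, Complex.neg_re]
      linarith
    have hFz := Ffun_symm z
    have hhalf := norm_Ffun_le_half h2
    -- compute re of e^{-iπ/4}: it's cos(π/4), im is -sin(π/4)
    have hre : (Complex.exp (-(Real.pi / 4 : ℂ) * Complex.I)).re = Real.cos (Real.pi/4) := by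
      rw [show -(Real.pi / 4 : ℂ) * Complex.I = ((-(Real.pi/4) : ℝ) : ℂ) * Complex.I by push_cast; ring]
      rw [Complex.exp_ofReal_mul_I_re, Real.cos_neg]
    have him : (Complex.exp (-(Real.pi / 4 : ℂ) * Complex.I)).im = -Real.sin (Real.pi/4) := by
      rw [show -(Real.pi / 4 : ℂ) * Complex.I = ((-(Real.pi/4) : ℝ) : ℂ) * Complex.I by push_cast; ring]
      rw [Complex.exp_ofReal_mul_I_im, Real.sin_neg]
    have hcos : Real.cos (Real.pi/4) = Real.sqrt 2 / 2 := Real.cos_pi_div_four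
    have hsin : Real.sin (Real.pi/4) = Real.sqrt 2 / 2 := Real.sin_pi_div_four
    have hwre : (Complex.exp (-(Real.pi / 4 : ℂ) * Complex.I) * z).re
        = Real.sqrt 2 / 2 * (z.re + z.im) := by
      rw [Complex.mul_re, hre, him, hcos, hsin]
      ring
    have hsum : z.re + z.im < 0 := by
      rw [hwre] at h
      have h2pos : (0:ℝ) < Real.sqrt 2 / 2 := by positivity
      nlinarith
    have hor : 0 ≤ z.re ∨ 0 ≤ z.im := Complex.neg_pi_div_two_le_arg_iff.1 hz
    have hprod : z.re * z.im ≤ 0 := by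
      rcases hor with h' | h' <;> nlinarith
    have hexp : ‖Complex.exp (-Complex.I * z^2)‖ ≤ 1 := by
      rw [Complex.norm_exp]
      have : (-Complex.I * z^2).re = 2 * (z.re * z.im) := by
        simp [Complex.mul_re, Complex.mul_im, Complex.I_re, Complex.I_im, pow_two]
        ring
      rw [this]
      exact Real.exp_le_one_iff.2 (by linarith)
    calc ‖Ffun z‖ = ‖Complex.exp (-Complex.I * z^2) - Ffun (-z)‖ := by rw [← hFz]
      _ ≤ ‖Complex.exp (-Complex.I * z^2)‖ + ‖Ffun (-z)‖ := norm_sub_le _ _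
      _ ≤ 1 + 1/2 := add_le_add hexp hhalf
      _ = 3/2 := by norm_num
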